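/- Let q ∈ (0,1) and γ_q(x) := exp(−(log(1/x))^q) for x ∈ (0,1]. Then for every ε > 0 there exist constants c_ε > 0 and x_ε ∈ (0,1) such that ∫_0^{1/2} γ_q(xy)/(y√(log(1/y))) dy ≤ c_ε · (γ_q(x))^{1−ε} for all 0 < x < x_ε. -/

import Mathlib

open Filter Topology Set MeasureTheory intervalIntegral

lemma aux_one_add_rpow {q ε' : ℝ} (hq0 : 0 < q) (hε'0 : 0 < ε') (hε' : ε' ≤ 1/2)
    {t : ℝ} (ht : 0 ≤ t) : 1 - ε' + ε'/2 * t ^ q ≤ (1 + t) ^ q := by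
  rcases le_total (t ^ q) 2 with h | h
  · have h1 : (1:ℝ) ≤ (1 + t) ^ q := Real.one_le_rpow (by linarith) hq0.le
    nlinarith
  · have h1 : t ^ q ≤ (1 + t) ^ q := Real.rpow_le_rpow ht (by linarith) hq0.le
    nlinarith

lemma aux_add_rpow {q ε' a b : ℝ} (hq0 : 0 < q) (hε'0 : 0 < ε') (hε' : ε' ≤ 1/2)
    (ha : 0 < a) (hb : 0 ≤ b) : (1 - ε') * a ^ q + ε'/2 * b ^ q ≤ (a + b) ^ q := by
  have ht : (0:ℝ) ≤ b / a := by positivity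
  have key := aux_one_add_rpow hq0 hε'0 hε' ht
  have h1 : (a + b) ^ q = a ^ q * (1 + b / a) ^ q := by
    rw [← Real.mul_rpow ha.le (by linarith)]
    congr 1
    field_simp
  have h2 : a ^ q * (b / a) ^ q = b ^ q := by
    rw [← Real.mul_rpow ha.le ht]
    congr 1
    field_simp
  have haq : (0:ℝ) ≤ a ^ q := Real.rpow_nonneg ha.le q
  calc (1 - ε') * a ^ q + ε'/2 * b ^ q
      = a ^ q * (1 - ε' + ε'/2 * (b/a) ^ q) := by rw [mul_add, ← h2]; ring
    _ ≤ a ^ q * (1 + b/a) ^ q := mul_le_mul_of_nonneg_left key haq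
    _ = (a + b) ^ q := h1.symm

lemma aux_C0 {q δ : ℝ} (hq0 : 0 < q) (hδ : 0 < δ) :
    ∃ C0 > 0, ∀ t : ℝ, Real.log 2 ≤ t → t ^ ((3:ℝ)/2) * Real.exp (-(δ * t ^ q)) ≤ C0 := by
  set n : ℕ := ⌈2/q⌉₊ with hn
  have hqn : (2:ℝ) ≤ q * n := by
    have h := Nat.le_ceil (2/q)
    rw [← hn] at h
    calc (2:ℝ) = q * (2/q) := by field_simp
      _ ≤ q * n := by nlinarith
  have hlog2 : (0:ℝ) < Real.log 2 := Real.log_pos (by norm_num)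
  refine ⟨(n.factorial : ℝ) * (1/δ)^n * (Real.log 2) ^ ((3:ℝ)/2 - q * n), by positivity, ?_⟩
  intro t ht
  have ht0 : 0 < t := lt_of_lt_of_le hlog2 ht
  set z := δ * t ^ q with hz
  have hz0 : 0 ≤ z := by positivity
  have hexp : z ^ n / (n.factorial : ℝ) ≤ Real.exp z := by
    have h := Real.sum_le_exp_of_nonneg hz0 (n+1)
    have h2 : z ^ n / (n.factorial : ℝ) ≤ ∑ i ∈ Finset.range (n+1), z ^ i / (i.factorial : ℝ) :=
      Finset.single_le_sum (f := fun i => z ^ i / (i.factorial : ℝ)) (fun i _ => by positivity)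
        (Finset.self_mem_range_succ n)
    linarith
  have htqn : (t ^ q) ^ n ≤ (n.factorial : ℝ) * (1/δ)^n * Real.exp z := by
    have hδn : (0:ℝ) < δ ^ n := by positivity
    have h1 : z ^ n = δ ^ n * (t ^ q) ^ n := by rw [hz, mul_pow]
    rw [div_le_iff₀ (by positivity : (0:ℝ) < (n.factorial : ℝ))] at hexp
    rw [h1] at hexp
    calc (t ^ q) ^ n = δ ^ n * (t ^ q) ^ n * (1/δ)^n := by
          rw [mul_assoc, mul_comm ((t^q)^n), ← mul_assoc, ← mul_pow]
          field_simp
          rw [one_pow]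
      _ ≤ Real.exp z * (n.factorial : ℝ) * (1/δ)^n := by gcongr
      _ = (n.factorial : ℝ) * (1/δ)^n * Real.exp z := by ring
  have hsplit : t ^ ((3:ℝ)/2) = t ^ (q * (n:ℝ)) * t ^ ((3:ℝ)/2 - q * n) := by
    rw [← Real.rpow_add ht0]; ring_nf
  have h2 : t ^ ((3:ℝ)/2 - q * n) ≤ (Real.log 2) ^ ((3:ℝ)/2 - q * n) :=
    Real.rpow_le_rpow_of_nonpos hlog2 ht (by linarith)
  have h3 : t ^ (q * (n:ℝ)) = (t ^ q) ^ n := by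
    rw [Real.rpow_mul ht0.le, Real.rpow_natCast]
  rw [Real.exp_neg, ← div_eq_mul_inv, div_le_iff₀ (Real.exp_pos z)]
  calc t ^ ((3:ℝ)/2) = (t ^ q) ^ n * t ^ ((3:ℝ)/2 - q * n) := by rw [hsplit, h3]
    _ ≤ ((n.factorial : ℝ) * (1/δ)^n * Real.exp z) * (Real.log 2) ^ ((3:ℝ)/2 - q * n) := by
        apply mul_le_mul htqn h2 (by positivity) (by positivity)
    _ = (n.factorial : ℝ) * (1/δ)^n * (Real.log 2) ^ ((3:ℝ)/2 - q * n) * Real.exp z := by ring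

lemma aux_F_deriv {y : ℝ} (hy0 : 0 < y) (hy1 : y < 1) :
    HasDerivAt (fun y : ℝ => -(Real.log y)⁻¹) ((y * (Real.log (1/y))^2)⁻¹) y := by
  have hlog : Real.log y ≠ 0 := ne_of_lt (Real.log_neg hy0 hy1)
  have h := ((Real.hasDerivAt_log hy0.ne').inv hlog).neg
  refine h.congr_deriv ?_
  rw [one_div, Real.log_inv, neg_sq, neg_div, neg_neg, div_eq_mul_inv, mul_inv]

lemma aux_F_cont : ContinuousOn (fun y : ℝ => -(Real.log y)⁻¹) (Icc 0 (1/2)) := by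
  intro y hy
  rcases eq_or_ne y 0 with rfl | hne
  · have h1 : Tendsto (fun y : ℝ => -(Real.log y)⁻¹) (𝓝[>] 0) (𝓝 0) := by
      have := Real.tendsto_log_nhdsGT_zero
      have h2 : Tendsto (fun y : ℝ => (-Real.log y)⁻¹) (𝓝[>] 0) (𝓝 0) :=
        tendsto_inv_atTop_zero.comp (tendsto_neg_atBot_atTop.comp this)
      simpa [inv_neg] using h2
    have hval : -(Real.log (0:ℝ))⁻¹ = 0 := by simp
    rw [ContinuousWithinAt, hval]
    have hsub : Icc (0:ℝ) (1/2) ⊆ Ici 0 := Icc_subset_Ici_self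
    refine Tendsto.mono_left ?_ (nhdsWithin_mono _ hsub)
    have : (𝓝[Ici (0:ℝ)] 0) = 𝓝[{0}] 0 ⊔ 𝓝[Ioi 0] 0 := by
      rw [← nhdsWithin_union]
      congr 1
      ext z; simp [le_iff_lt_or_eq, or_comm]
    rw [this]
    refine Tendsto.sup ?_ h1
    rw [nhdsWithin_singleton]
    refine tendsto_pure_nhds (fun y : ℝ => -(Real.log y)⁻¹) 0 |>.congr ?_ |>.mono_right ?_
    · intro x; rfl
    · simp
  · have hy0 : 0 < y := lt_of_le_of_ne hy.1 (Ne.symm hne)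
    have hy1 : y < 1 := lt_of_le_of_lt hy.2 (by norm_num)
    exact (((Real.continuousAt_log hne).inv₀ (ne_of_lt (Real.log_neg hy0 hy1))).neg).continuousWithinAt

lemma aux_g0_int : IntegrableOn (fun y : ℝ => (y * (Real.log (1/y))^2)⁻¹) (Ioc (0:ℝ) (1/2)) := by
  apply intervalIntegral.integrableOn_deriv_of_nonneg aux_F_cont
  · intro y hy
    exact aux_F_deriv hy.1 (lt_trans hy.2 (by norm_num))
  · intro y hy
    exact inv_nonneg.2 (mul_nonneg hy.1.le (sq_nonneg _))

lemma aux_g0_val :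
    ∫ y in (0:ℝ)..(1/2), (y * (Real.log (1/y))^2)⁻¹ = (Real.log 2)⁻¹ := by
  have hint : IntervalIntegrable (fun y : ℝ => (y * (Real.log (1/y))^2)⁻¹) volume 0 (1/2) := by
    rw [intervalIntegrable_iff_integrableOn_Ioc_of_le (by norm_num)]
    exact aux_g0_int
  rw [intervalIntegral.integral_eq_sub_of_hasDeriv_right_of_le (by norm_num) aux_F_cont
    (fun y hy => (aux_F_deriv hy.1 (lt_trans hy.2 (by norm_num))).hasDerivWithinAt) hint]
  rw [Real.log_div (by norm_num) (by norm_num)]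
  simp [inv_neg]

/-- For `q ∈ (0,1)`, the function `γ_q(x) = exp(−(log(1/x))^q)` satisfies condition (C_{0+}):
for every `ε > 0` there are `c_ε > 0` and `x_ε ∈ (0,1)` with
`∫_0^{1/2} γ_q(xy)/(y √(log(1/y))) dy ≤ c_ε (γ_q(x))^{1−ε}` for all `0 < x < x_ε`. -/
theorem stmt6 (q : ℝ) (hq : q ∈ Set.Ioo (0:ℝ) 1) :
    ∀ ε > (0:ℝ), ∃ cε > (0:ℝ), ∃ xε ∈ Set.Ioo (0:ℝ) 1, ∀ x : ℝ, 0 < x → x < xε →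
      (∫ y in (0:ℝ)..(1/2),
          Real.exp (-(Real.log (1/(x*y))) ^ q) / (y * Real.sqrt (Real.log (1/y))))
        ≤ cε * (Real.exp (-(Real.log (1/x)) ^ q)) ^ (1 - ε) := by
  obtain ⟨hq0, hq1⟩ := hq
  intro ε hε
  set ε' : ℝ := min ε (1/2) with hε'def
  have hε'0 : 0 < ε' := lt_min hε (by norm_num)
  have hε'half : ε' ≤ 1/2 := min_le_right _ _
  have hε'ε : ε' ≤ ε := min_le_left _ _
  have hδ0 : 0 < ε'/2 := by positivity
  obtain ⟨C0, hC0pos, hC0⟩ := aux_C0 hq0 hδ0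
  have hlog2 : (0:ℝ) < Real.log 2 := Real.log_pos (by norm_num)
  refine ⟨C0 * (Real.log 2)⁻¹, by positivity, 1/2, by norm_num, ?_⟩
  intro x hx0 hxh
  set a : ℝ := Real.log (1/x) with hadef
  have ha : Real.log 2 ≤ a := by
    rw [hadef]
    refine (Real.log_le_log_iff (by norm_num) (by positivity)).2 ?_
    rw [le_div_iff₀ hx0]; linarith
  have ha0 : 0 < a := lt_of_lt_of_le hlog2 ha
  set γ : ℝ := Real.exp (-a ^ q) with hγdef
  have hγ0 : 0 < γ := Real.exp_pos _
  have hγ1 : γ ≤ 1 := Real.exp_le_one_iff.2 (neg_nonpos.2 (Real.rpow_nonneg ha0.le q))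
  set K : ℝ := γ ^ (1 - ε') with hKdef
  have hK0 : 0 ≤ K := Real.rpow_nonneg hγ0.le _
  have hpt : ∀ y ∈ Ioc (0:ℝ) (1/2),
      Real.exp (-(Real.log (1/(x*y))) ^ q) / (y * Real.sqrt (Real.log (1/y)))
        ≤ K * C0 * (y * (Real.log (1/y))^2)⁻¹ := by
    intro y hy
    obtain ⟨hy0, hyh⟩ := hy
    set b : ℝ := Real.log (1/y) with hbdef
    have hb : Real.log 2 ≤ b := by
      rw [hbdef]
      refine (Real.log_le_log_iff (by norm_num) (by positivity)).2 ?_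
      rw [le_div_iff₀ hy0]; linarith
    have hb0 : 0 < b := lt_of_lt_of_le hlog2 hb
    have hab : Real.log (1/(x*y)) = a + b := by
      rw [hadef, hbdef, one_div, one_div, one_div, Real.log_inv, Real.log_inv, Real.log_inv,
        Real.log_mul hx0.ne' hy0.ne']
      ring
    rw [hab]
    have hkey : (1 - ε') * a ^ q + ε'/2 * b ^ q ≤ (a + b) ^ q :=
      aux_add_rpow hq0 hε'0 hε'half ha0 hb0.le
    have hexp1 : Real.exp (-(a+b) ^ q) ≤ K * Real.exp (-(ε'/2 * b ^ q)) := by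
      rw [hKdef, hγdef, ← Real.exp_mul, ← Real.exp_add]
      apply Real.exp_le_exp.2
      have heq : -a ^ q * (1 - ε') + -(ε'/2 * b ^ q) = -((1 - ε') * a ^ q + ε'/2 * b ^ q) := by
        ring
      rw [heq]
      exact neg_le_neg hkey
    have hden0 : 0 < y * Real.sqrt b := mul_pos hy0 (Real.sqrt_pos.2 hb0)
    have hbb : b ^ ((3:ℝ)/2) * b ^ ((1:ℝ)/2) = b ^ 2 := by
      rw [← Real.rpow_natCast b 2, ← Real.rpow_add hb0]
      norm_num
    have hstep : Real.exp (-(ε'/2 * b ^ q)) / (y * Real.sqrt b) ≤ C0 * (y * b ^ 2)⁻¹ := by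
      rw [Real.sqrt_eq_rpow, ← div_eq_mul_inv,
        div_le_div_iff₀ (by positivity) (by positivity)]
      calc Real.exp (-(ε'/2 * b ^ q)) * (y * b ^ 2)
          = y * b ^ ((1:ℝ)/2) * (b ^ ((3:ℝ)/2) * Real.exp (-(ε'/2 * b ^ q))) := by
            rw [← hbb]; ring
        _ ≤ y * b ^ ((1:ℝ)/2) * C0 :=
            mul_le_mul_of_nonneg_left (hC0 b hb) (by positivity)
        _ = C0 * (y * b ^ ((1:ℝ)/2)) := by ring
    calc Real.exp (-(a+b) ^ q) / (y * Real.sqrt b)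
        ≤ K * Real.exp (-(ε'/2 * b ^ q)) / (y * Real.sqrt b) :=
          by gcongr
      _ = K * (Real.exp (-(ε'/2 * b ^ q)) / (y * Real.sqrt b)) := by ring
      _ ≤ K * (C0 * (y * b ^ 2)⁻¹) := mul_le_mul_of_nonneg_left hstep hK0
      _ = K * C0 * (y * b ^ 2)⁻¹ := by ring
  rw [intervalIntegral.integral_of_le (by norm_num : (0:ℝ) ≤ 1/2)]
  have hmajint : IntegrableOn
      (fun y : ℝ => K * C0 * (y * (Real.log (1/y))^2)⁻¹) (Ioc (0:ℝ) (1/2)) :=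
    aux_g0_int.const_mul _
  have hfint : IntegrableOn
      (fun y : ℝ => Real.exp (-(Real.log (1/(x*y))) ^ q) / (y * Real.sqrt (Real.log (1/y))))
      (Ioc (0:ℝ) (1/2)) := by
    refine hmajint.mono' ?_ ?_
    · apply Measurable.aestronglyMeasurable
      have m1 : Measurable fun y : ℝ => Real.exp (-(Real.log (1/(x*y))) ^ q) :=
        Real.measurable_exp.comp
          (((Real.measurable_log.comp (measurable_const.div
            (measurable_const.mul measurable_id))).pow_const q).neg)
      have m2 : Measurable fun y : ℝ => y * Real.sqrt (Real.log (1/y)) :=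
        measurable_id.mul (Real.continuous_sqrt.measurable.comp
          (Real.measurable_log.comp (measurable_const.div measurable_id)))
      exact m1.div m2
    · refine (ae_restrict_iff' measurableSet_Ioc).2 (ae_of_all _ fun y hy => ?_)
      rw [Real.norm_eq_abs, abs_of_nonneg (div_nonneg (Real.exp_pos _).le
        (mul_nonneg hy.1.le (Real.sqrt_nonneg _)))]
      exact hpt y hy
  have hIocval : ∫ y in Ioc (0:ℝ) (1/2), (y * (Real.log (1/y))^2)⁻¹ = (Real.log 2)⁻¹ := by
    rw [← intervalIntegral.integral_of_le (by norm_num : (0:ℝ) ≤ 1/2)]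
    exact aux_g0_val
  have hKle : K ≤ γ ^ (1 - ε) :=
    Real.rpow_le_rpow_of_exponent_ge hγ0 hγ1 (by linarith)
  calc ∫ y in Ioc (0:ℝ) (1/2),
        Real.exp (-(Real.log (1/(x*y))) ^ q) / (y * Real.sqrt (Real.log (1/y)))
      ≤ ∫ y in Ioc (0:ℝ) (1/2), K * C0 * (y * (Real.log (1/y))^2)⁻¹ :=
        setIntegral_mono_on hfint hmajint measurableSet_Ioc hpt
    _ = K * C0 * ∫ y in Ioc (0:ℝ) (1/2), (y * (Real.log (1/y))^2)⁻¹ :=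
        MeasureTheory.integral_const_mul _ _
    _ = K * C0 * (Real.log 2)⁻¹ := by rw [hIocval]
    _ = (C0 * (Real.log 2)⁻¹) * K := by ring
    _ ≤ (C0 * (Real.log 2)⁻¹) * γ ^ (1 - ε) :=
        mul_le_mul_of_nonneg_left hKle (by positivity)
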